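/- If a finite game graph G with n players and |V| positions yields recurring hierarchical information, then every gap of every play of G has length at most |V|·2^{2n²|V|²}; in particular the gap size of G is bounded by 2^{O(n²|V|²)}. -/

import Mathlib

/-- A finite game graph for `n` players: positions `V` with initial position `init`,
action sets `A i`, observation sets `B i`, a move relation labelled by action
profiles (with no dead ends), and observation functions. -/
structure GameGraph (n : ℕ) (V : Type) (A : Fin n → Type) (B : Fin n → Type) where
  init : V
  move : V → (∀ i, A i) → V → Prop
  noDeadEnd : ∀ v a, ∃ w, move v a w
  obs : ∀ i : Fin n, V → B i

/-- A Moore machine with finite state set `Q`, input alphabet `σ`, output alphabet `γ`. -/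
structure Moore (σ γ : Type) where
  Q : Type
  finQ : Fintype Q
  q0 : Q
  δ : Q → σ → Q
  out : Q → γ

namespace Moore

/-- The output letter of a Moore machine after reading a word. -/
def output {σ γ : Type} (mc : Moore σ γ) (w : List σ) : γ :=
  mc.out (w.foldl mc.δ mc.q0)

/-- The output word of a Moore machine along a word: the `k`-th letter is the
output after reading the prefix of length `k+1`. -/
def outWord {σ γ : Type} (mc : Moore σ γ) (w : List σ) : List γ :=
  ((w.scanl mc.δ mc.q0).drop 1).map mc.out

end Moore

/-- A deterministic parity automaton over alphabet `α`. -/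
structure ParityAut (α : Type) where
  Q : Type
  finQ : Fintype Q
  q0 : Q
  δ : Q → α → Q
  prio : Q → ℕ

namespace ParityAut

/-- The run of a deterministic parity automaton on an infinite word. -/
def run {α : Type} (d : ParityAut α) (f : ℕ → α) : ℕ → d.Q
  | 0 => d.q0
  | t + 1 => d.δ (run d f t) (f t)

/-- Parity acceptance: the least priority occurring infinitely often is even. -/
def Accepts {α : Type} (d : ParityAut α) (f : ℕ → α) : Prop :=
  Even (sInf { p | ∃ᶠ t in Filter.atTop, d.prio (d.run f t) = p })

end ParityAut

/-- A deterministic Büchi automaton over alphabet `α` with state set `σ`. -/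
structure DetBuchi (α σ : Type) where
  q0 : σ
  δ : σ → α → σ
  accept : Set σ

namespace DetBuchi

/-- The run of a deterministic Büchi automaton on an infinite word. -/
def run {α σ : Type} (d : DetBuchi α σ) (f : ℕ → α) : ℕ → σ
  | 0 => d.q0
  | t + 1 => d.δ (run d f t) (f t)

/-- Büchi acceptance: the run visits accepting states infinitely often. -/
def Accepts {α σ : Type} (d : DetBuchi α σ) (f : ℕ → α) : Prop :=
  ∃ᶠ t in Filter.atTop, d.run f t ∈ d.accept

end DetBuchi

namespace GameGraph

variable {n : ℕ} {V : Type} {A B : Fin n → Type}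

/-- Two positions are linked by a move (for some action profile). -/
def step (G : GameGraph n V A B) (u w : V) : Prop := ∃ a, G.move u a w

/-- A history: a nonempty sequence starting at the initial position, each
consecutive pair lying on a move. -/
def IsHistory (G : GameGraph n V A B) (π : List V) : Prop :=
  π.head? = some G.init ∧ π.Chain' G.step

/-- The observation sequence of player `i` along a history (the observation at
the initial position is discarded). -/
def obsSeq (G : GameGraph n V A B) (i : Fin n) (π : List V) : List (B i) :=
  (π.drop 1).map (G.obs i)

/-- Histories are indistinguishable for player `i` if they yield the same observations. -/
def Indist (G : GameGraph n V A B) (i : Fin n) (π π' : List V) : Prop :=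
  G.obsSeq i π = G.obsSeq i π'

/-- The information set of player `i` at history `π`. -/
def InfoSet (G : GameGraph n V A B) (i : Fin n) (π : List V) : Set (List V) :=
  { π' | G.IsHistory π' ∧ G.Indist i π π' }

/-- A history yields hierarchical information if the information sets of players
are totally ordered by inclusion. -/
def HistHI (G : GameGraph n V A B) (π : List V) : Prop :=
  ∀ i j : Fin n, G.InfoSet i π ⊆ G.InfoSet j π ∨ G.InfoSet j π ⊆ G.InfoSet i π

/-- Static hierarchical information: there is a total order of the players such
that along every history, the information sets respect this order. -/
def StaticHI (G : GameGraph n V A B) : Prop :=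
  ∃ ord : Fin n → Fin n → Prop, IsLinearOrder (Fin n) ord ∧
    ∀ i j : Fin n, ord i j → ∀ π, G.IsHistory π → G.InfoSet i π ⊆ G.InfoSet j π

/-- Hierarchical observation: there is a total order of the players such that
the observation of a smaller player determines that of a bigger player, positionally. -/
def HierObs (G : GameGraph n V A B) : Prop :=
  ∃ ord : Fin n → Fin n → Prop, IsLinearOrder (Fin n) ord ∧
    ∀ i j : Fin n, ord i j → ∀ v v' : V, G.obs i v = G.obs i v' → G.obs j v = G.obs j v'

/-- Dynamic hierarchical information: every history yields hierarchical information. -/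
def DynamicHI (G : GameGraph n V A B) : Prop := ∀ π, G.IsHistory π → G.HistHI π

/-- The prefix `v₀ … v_t` of a play, as a list. -/
def playPrefix (f : ℕ → V) (t : ℕ) : List V := (List.range (t + 1)).map f

/-- A play: an infinite sequence all of whose prefixes are histories. -/
def IsPlay (G : GameGraph n V A B) (f : ℕ → V) : Prop :=
  ∀ t, G.IsHistory (playPrefix f t)

/-- A play yields recurring hierarchical information if infinitely many of its
prefix histories yield hierarchical information. -/
def PlayRecurringHI (G : GameGraph n V A B) (f : ℕ → V) : Prop :=
  ∀ T, ∃ t, T ≤ t ∧ G.HistHI (playPrefix f t)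

/-- A game yields recurring hierarchical information if every play does. -/
def RecurringHI (G : GameGraph n V A B) : Prop :=
  ∀ f, G.IsPlay f → G.PlayRecurringHI f

/-- `[t, t+ℓ]` is a gap of the play `f`: no prefix of length `r ∈ [t, t+ℓ]` yields
hierarchical information.  The length of this gap is `ℓ + 1`. -/
def IsGap (G : GameGraph n V A B) (f : ℕ → V) (t ℓ : ℕ) : Prop :=
  ∀ r, t ≤ r → r ≤ t + ℓ → ¬ G.HistHI (playPrefix f r)

/-- Information-consistency of a strategy profile: each component is constant on
indistinguishability classes of histories. -/
def Consistent (G : GameGraph n V A B) (s : ∀ i, List V → A i) : Prop :=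
  ∀ (i : Fin n) (π π' : List V),
    G.IsHistory π → G.IsHistory π' → G.Indist i π π' → s i π = s i π'

/-- A play follows a strategy profile. -/
def Follows (G : GameGraph n V A B) (s : ∀ i, List V → A i) (f : ℕ → V) : Prop :=
  f 0 = G.init ∧ ∀ t, ∃ a, G.move (f t) a (f (t + 1)) ∧ ∀ i, a i = s i (playPrefix f t)

/-- A distributed winning strategy for winning condition `W`: an information-consistent
profile all of whose outcomes lie in `W`. -/
def WinningProfile (G : GameGraph n V A B) (W : Set (ℕ → V)) (s : ∀ i, List V → A i) : Prop :=
  G.Consistent s ∧ ∀ f, G.Follows s f → f ∈ W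

/-- A finite-state strategy for player `i`: implemented by a Moore machine reading
the observation sequence of the history. -/
def FinStateStrategy (G : GameGraph n V A B) (i : Fin n) (si : List V → A i) : Prop :=
  ∃ mc : Moore (B i) (A i), ∀ π, G.IsHistory π → si π = mc.output (G.obsSeq i π)

/-- The game admits a distributed winning strategy for `W`. -/
def HasDWS (G : GameGraph n V A B) (W : Set (ℕ → V)) : Prop :=
  ∃ s : ∀ i, List V → A i, G.WinningProfile W s

/-- The game admits a finite-state distributed winning strategy for `W`. -/
def HasFinDWS (G : GameGraph n V A B) (W : Set (ℕ → V)) : Prop :=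
  ∃ s : ∀ i, List V → A i, G.WinningProfile W s ∧ ∀ i, G.FinStateStrategy i (s i)

/-- `i ⪯_π j` : at history `π`, player `i` is at least as informed as player `j`. -/
def infoLE (G : GameGraph n V A B) (π : List V) (i j : Fin n) : Prop :=
  G.InfoSet i π ⊆ G.InfoSet j π

/-- The information rank of player `i` at history `π`: the number of players `j`
with `j ≺_π i`, or with `j < i` and `j ≈_π i`. -/
noncomputable def rank (G : GameGraph n V A B) (i : Fin n) (π : List V) : ℕ :=
  Nat.card {j : Fin n //
    (G.infoLE π j i ∧ ¬ G.infoLE π i j) ∨ (j < i ∧ G.infoLE π j i ∧ G.infoLE π i j)}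

/-- The signal `λ_j^i`: the set of observations of player `i` at the last positions of
histories in the information set of player `j`. -/
def lam (G : GameGraph n V A B) (i j : Fin n) (π : List V) : Set (B i) :=
  { b | ∃ π', π' ∈ G.InfoSet j π ∧ ∃ v, π'.getLast? = some v ∧ G.obs i v = b }

/-- Players `i` and `j` cross at stage `ℓ` of the play `f`. -/
def Crossing (G : GameGraph n V A B) (f : ℕ → V) (ℓ : ℕ) (i j : Fin n) : Prop :=
  G.InfoSet i (playPrefix f ℓ) ⊂ G.InfoSet j (playPrefix f ℓ) ∧
  G.InfoSet j (playPrefix f (ℓ + 1)) ⊂ G.InfoSet i (playPrefix f (ℓ + 1))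

/-- A game is cross-free if no two players cross at any stage of any play. -/
def CrossFree (G : GameGraph n V A B) : Prop :=
  ∀ f, G.IsPlay f → ∀ (ℓ : ℕ) (i j : Fin n), ¬ G.Crossing f ℓ i j

end GameGraph

namespace GameGraph

variable {n : ℕ} {V : Type} {A B : Fin n → Type}

lemma IsHistory.ne_nil {G : GameGraph n V A B} {π : List V} (h : G.IsHistory π) : π ≠ [] := by
  rintro rfl; simp [IsHistory] at h

lemma exists_bool_iff (P : Prop) : ∃ b : Bool, (b = true ↔ P) := by
  by_cases h : P
  · exact ⟨true, by simp [h]⟩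
  · exact ⟨false, by simp [h]⟩

lemma obsSeq_concat (G : GameGraph n V A B) (i : Fin n) {π : List V} (h : π ≠ []) (v : V) :
    G.obsSeq i (π ++ [v]) = G.obsSeq i π ++ [G.obs i v] := by
  unfold obsSeq
  rw [List.drop_append_of_le_length (by simpa [Nat.one_le_iff_ne_zero] using h),
    List.map_append]
  rfl

lemma indist_concat_iff (G : GameGraph n V A B) (i : Fin n) {π π' : List V}
    (h : π ≠ []) (h' : π' ≠ []) (v w : V) :
    G.Indist i (π ++ [v]) (π' ++ [w]) ↔ G.Indist i π π' ∧ G.obs i v = G.obs i w := by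
  unfold Indist
  rw [obsSeq_concat _ _ h, obsSeq_concat _ _ h']
  constructor
  · intro hh
    obtain ⟨h1, h2⟩ := List.append_inj' hh rfl
    exact ⟨h1, by simpa using h2⟩
  · rintro ⟨h1, h2⟩; rw [h1, h2]

lemma isHistory_concat_iff (G : GameGraph n V A B) {π : List V} (h : π ≠ []) (w : V) :
    G.IsHistory (π ++ [w]) ↔ G.IsHistory π ∧ ∃ u, π.getLast? = some u ∧ G.step u w := by
  obtain ⟨a, l, rfl⟩ := List.exists_cons_of_ne_nil h
  unfold IsHistory
  unfold List.Chain'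
  rw [List.isChain_append]
  constructor
  · rintro ⟨hh, hc1, _, hc3⟩
    have hu : ((a :: l).getLast?).isSome := by simp
    obtain ⟨u, hu⟩ := Option.isSome_iff_exists.mp hu
    exact ⟨⟨by simpa using hh, hc1⟩, u, hu, hc3 u hu w rfl⟩
  · rintro ⟨⟨hh, hc⟩, u, hu, hs⟩
    refine ⟨by simpa using hh, hc, List.isChain_singleton w, ?_⟩
    intro x hx y hy
    simp only [List.head?_cons, Option.mem_def, Option.some.injEq] at hy
    rw [hu] at hx
    simp only [Option.mem_def, Option.some.injEq] at hx
    subst hx; subst hy; exact hs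

/-- The knowledge state of the pair `(i,j)` at history `π`: pairs `(v, b)` where `v` is
the last position of some history `π'` indistinguishable from `π` for player `i`, and
`b` records whether `π'` is also indistinguishable for player `j`. -/
def know (G : GameGraph n V A B) (i j : Fin n) (π : List V) : Set (V × Bool) :=
  { p | ∃ π', G.IsHistory π' ∧ G.Indist i π π' ∧ π'.getLast? = some p.1 ∧
      (p.2 = true ↔ G.Indist j π π') }

lemma infoSet_subset_iff_know (G : GameGraph n V A B) (i j : Fin n) (π : List V) :
    G.InfoSet i π ⊆ G.InfoSet j π ↔ ∀ p ∈ G.know i j π, p.2 = true := by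
  constructor
  · rintro h p ⟨π', h1, h2, h3, h4⟩
    exact h4.mpr (h (show π' ∈ G.InfoSet i π from ⟨h1, h2⟩)).2
  · rintro h π' ⟨h1, h2⟩
    refine ⟨h1, ?_⟩
    obtain ⟨v, hv⟩ := Option.isSome_iff_exists.mp (List.getLast?_isSome.mpr h1.ne_nil)
    obtain ⟨b, hb⟩ := exists_bool_iff (G.Indist j π π')
    exact hb.mp (h (v, b) ⟨π', h1, h2, hv, hb⟩)

lemma histHI_of_know_eq (G : GameGraph n V A B) {π π' : List V}
    (h : ∀ i j, G.know i j π = G.know i j π') : G.HistHI π ↔ G.HistHI π' := by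
  unfold HistHI
  apply forall_congr'; intro i; apply forall_congr'; intro j
  rw [infoSet_subset_iff_know, infoSet_subset_iff_know,
    infoSet_subset_iff_know, infoSet_subset_iff_know, h i j, h j i]

/-- One-step update of the knowledge state. -/
def kstep (G : GameGraph n V A B) (i j : Fin n) (S : Set (V × Bool)) (v : V) :
    Set (V × Bool) :=
  { p | ∃ q ∈ S, G.step q.1 p.1 ∧ G.obs i p.1 = G.obs i v ∧
      (p.2 = true ↔ (q.2 = true ∧ G.obs j p.1 = G.obs j v)) }

lemma know_concat (G : GameGraph n V A B) (i j : Fin n) {π : List V} (hπ : π ≠ []) (v : V) :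
    G.know i j (π ++ [v]) = G.kstep i j (G.know i j π) v := by
  ext p
  constructor
  · rintro ⟨π'', h1, h2, h3, h4⟩
    obtain rfl | ⟨π', w, rfl⟩ := (π'').eq_nil_or_concat
    · exact absurd h1.ne_nil (by simp)
    rw [List.concat_eq_append] at h1 h2 h3 h4
    have hπ' : π' ≠ [] := by
      rintro rfl
      have := h2
      unfold Indist at this
      rw [obsSeq_concat _ _ hπ] at this
      simp [obsSeq] at this
    rw [isHistory_concat_iff _ hπ'] at h1
    obtain ⟨h1, u, hu, hs⟩ := h1
    rw [indist_concat_iff _ _ hπ hπ'] at h2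
    obtain ⟨h2, hov⟩ := h2
    have hw : w = p.1 := by simpa using h3
    subst hw
    obtain ⟨b, hb⟩ := exists_bool_iff (G.Indist j π π')
    refine ⟨(u, b), ⟨π', h1, h2, hu, hb⟩, hs, hov.symm, ?_⟩
    rw [h4, indist_concat_iff _ _ hπ hπ', hb]
    constructor
    · rintro ⟨x, y⟩; exact ⟨x, y.symm⟩
    · rintro ⟨x, y⟩; exact ⟨x, y.symm⟩
  · rintro ⟨⟨u, b⟩, ⟨π', h1, h2, h3, h4⟩, hs, hov, hiff⟩
    refine ⟨π' ++ [p.1], ?_, ?_, ?_, ?_⟩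
    · exact (isHistory_concat_iff _ h1.ne_nil _).mpr ⟨h1, u, h3, hs⟩
    · exact (indist_concat_iff _ _ hπ h1.ne_nil _ _).mpr ⟨h2, hov.symm⟩
    · simp
    · rw [hiff, indist_concat_iff _ _ hπ h1.ne_nil, h4]
      constructor
      · rintro ⟨x, y⟩; exact ⟨x, y.symm⟩
      · rintro ⟨x, y⟩; exact ⟨x, y.symm⟩

lemma playPrefix_zero (f : ℕ → V) : playPrefix f 0 = [f 0] := rfl

lemma playPrefix_succ (f : ℕ → V) (t : ℕ) :
    playPrefix f (t + 1) = playPrefix f t ++ [f (t + 1)] := by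
  unfold playPrefix
  rw [List.range_succ, List.map_append]
  rfl

lemma playPrefix_ne_nil (f : ℕ → V) (t : ℕ) : playPrefix f t ≠ [] := by
  unfold playPrefix
  simp [List.range_succ]

lemma isPlay_iff (G : GameGraph n V A B) (f : ℕ → V) :
    G.IsPlay f ↔ f 0 = G.init ∧ ∀ s, G.step (f s) (f (s + 1)) := by
  constructor
  · intro h
    refine ⟨by simpa [playPrefix_zero, IsHistory] using (h 0).1, fun s => ?_⟩
    have := (h (s + 1)).2
    unfold List.Chain' at this
    rw [playPrefix, List.isChain_map, List.isChain_range_succ] at this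
    exact this s (by omega)
  · rintro ⟨h0, hs⟩ t
    constructor
    · rw [playPrefix, List.range_succ_eq_map]
      simpa using h0
    · unfold List.Chain'
      rw [playPrefix, List.isChain_map, List.isChain_range_succ]
      exact fun m _ => hs m

end GameGraph

namespace GameGraph

variable {n : ℕ} {V : Type} {A B : Fin n → Type}

/-- Cycling re-indexing: identity up to `r1`, then cycles through `[r1, r2)`. -/
def cyc (r1 r2 : ℕ) : ℕ → ℕ
  | 0 => 0
  | s + 1 => if cyc r1 r2 s + 1 = r2 then r1 else cyc r1 r2 s + 1

lemma cyc_lt {r1 r2 : ℕ} (h : r1 < r2) : ∀ s, cyc r1 r2 s < r2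
  | 0 => lt_of_le_of_lt (Nat.zero_le _) h
  | s + 1 => by
    unfold cyc
    split
    · exact h
    · next hne => exact lt_of_le_of_ne (Nat.succ_le_of_lt (cyc_lt h s)) hne

lemma cyc_eq_self {r1 r2 : ℕ} (h : r1 < r2) : ∀ s, s ≤ r1 → cyc r1 r2 s = s
  | 0, _ => rfl
  | s + 1, hs => by
    unfold cyc
    rw [cyc_eq_self h s (by omega), if_neg (by omega)]

lemma le_cyc {r1 r2 : ℕ} (h : r1 < r2) : ∀ s, r1 ≤ s → r1 ≤ cyc r1 r2 s
  | 0, hs => hs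
  | s + 1, hs => by
    rcases Nat.lt_or_ge r1 (s + 1) with h' | h'
    · unfold cyc
      split
      · exact le_rfl
      · have := le_cyc h s (by omega); omega
    · rw [cyc_eq_self h (s + 1) (by omega)]; omega

lemma cyc_succ (r1 r2 : ℕ) (s : ℕ) :
    cyc r1 r2 (s + 1) = cyc r1 r2 s + 1 ∨
      (cyc r1 r2 (s + 1) = r1 ∧ cyc r1 r2 s + 1 = r2) := by
  rw [show cyc r1 r2 (s + 1) = if cyc r1 r2 s + 1 = r2 then r1 else cyc r1 r2 s + 1 from rfl]
  split
  · next h => exact Or.inr ⟨rfl, h⟩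
  · exact Or.inl rfl

lemma pump (G : GameGraph n V A B) (hG : G.RecurringHI) (f : ℕ → V) (hf : G.IsPlay f)
    (t ℓ : ℕ) (hgap : G.IsGap f t ℓ) (r1 r2 : ℕ) (ht1 : t ≤ r1) (h12 : r1 < r2)
    (h2 : r2 ≤ t + ℓ + 1) (hpos : f r1 = f r2)
    (hkn : ∀ i j, G.know i j (playPrefix f r1) = G.know i j (playPrefix f r2)) : False := by
  have hstep : ∀ s, G.step (f s) (f (s + 1)) := ((G.isPlay_iff f).mp hf).2
  have hgplay : G.IsPlay (fun s => f (cyc r1 r2 s)) := by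
    rw [G.isPlay_iff]
    constructor
    · rw [show cyc r1 r2 0 = 0 from rfl]
      exact ((G.isPlay_iff f).mp hf).1
    · intro s
      show G.step (f (cyc r1 r2 s)) (f (cyc r1 r2 (s + 1)))
      rcases cyc_succ r1 r2 s with h | ⟨ha, hb⟩
      · rw [h]; exact hstep _
      · have hst := hstep (cyc r1 r2 s)
        rw [hb] at hst
        rw [ha, hpos]; exact hst
  have hknow : ∀ s i j, G.know i j (playPrefix (fun s => f (cyc r1 r2 s)) s) =
      G.know i j (playPrefix f (cyc r1 r2 s)) := by
    intro s
    induction s with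
    | zero => intro i j; rfl
    | succ s ih =>
      intro i j
      rw [playPrefix_succ, know_concat _ _ _ (playPrefix_ne_nil _ _), ih i j]
      show G.kstep i j (G.know i j (playPrefix f (cyc r1 r2 s))) (f (cyc r1 r2 (s + 1))) =
        G.know i j (playPrefix f (cyc r1 r2 (s + 1)))
      rcases cyc_succ r1 r2 s with h | ⟨ha, hb⟩
      · rw [h, playPrefix_succ, know_concat _ _ _ (playPrefix_ne_nil _ _)]
      · have e2 : G.know i j (playPrefix f (cyc r1 r2 s + 1)) =
            G.kstep i j (G.know i j (playPrefix f (cyc r1 r2 s))) (f (cyc r1 r2 s + 1)) := by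
          rw [playPrefix_succ, know_concat _ _ _ (playPrefix_ne_nil _ _)]
        rw [hb] at e2
        rw [ha, hkn i j, e2, hpos]
  obtain ⟨s, hs, hhi⟩ := hG _ hgplay r1
  have hc1 : r1 ≤ cyc r1 r2 s := le_cyc h12 s hs
  have hc2 : cyc r1 r2 s < r2 := cyc_lt h12 s
  exact hgap (cyc r1 r2 s) (by omega) (by omega)
    ((G.histHI_of_know_eq (fun i j => hknow s i j)).mp hhi)

end GameGraph


/-- If a finite game graph with `n` players and `|V|` positions yields
recurring hierarchical information, then every gap of every play has length at most
`|V| · 2^(2n²|V|²)`. -/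
theorem statement13 {n : ℕ} {V : Type} {A B : Fin n → Type}
    [Fintype V] [∀ i, Fintype (A i)] [∀ i, Fintype (B i)]
    (G : GameGraph n V A B) (hG : G.RecurringHI) :
    ∀ f, G.IsPlay f → ∀ t ℓ, G.IsGap f t ℓ →
      ℓ + 1 ≤ Fintype.card V * 2 ^ (2 * n ^ 2 * Fintype.card V ^ 2) := by
  classical
  intro f hf t ℓ hgap
  by_contra hlt
  push_neg at hlt
  haveI : Nonempty V := ⟨f 0⟩
  have hv : 1 ≤ Fintype.card V := Fintype.card_pos
  have hcard : Fintype.card (V × (Fin n → Fin n → Set (V × Bool))) ≤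
      Fintype.card V * 2 ^ (2 * n ^ 2 * Fintype.card V ^ 2) := by
    rw [Fintype.card_prod, Fintype.card_fun, Fintype.card_fun, Fintype.card_set,
      Fintype.card_prod, Fintype.card_bool, Fintype.card_fin, ← pow_mul, ← pow_mul]
    refine Nat.mul_le_mul_left _ (Nat.pow_le_pow_right (by norm_num) ?_)
    have hvv : Fintype.card V ≤ Fintype.card V ^ 2 := by nlinarith
    calc Fintype.card V * 2 * (n * n) = 2 * n ^ 2 * Fintype.card V := by ring
      _ ≤ 2 * n ^ 2 * Fintype.card V ^ 2 := Nat.mul_le_mul_left _ hvv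
  have hplt : Fintype.card (V × (Fin n → Fin n → Set (V × Bool))) <
      Fintype.card (Fin (ℓ + 1)) := by
    rw [Fintype.card_fin]; omega
  obtain ⟨a, b, hab, heq⟩ := Fintype.exists_ne_map_eq_of_card_lt
    (fun k : Fin (ℓ + 1) =>
      ((f (t + (k : ℕ)), fun i j => G.know i j (GameGraph.playPrefix f (t + (k : ℕ)))) :
        V × (Fin n → Fin n → Set (V × Bool)))) hplt
  have key : ∀ a b : Fin (ℓ + 1), (a : ℕ) < (b : ℕ) →
      f (t + (a : ℕ)) = f (t + (b : ℕ)) →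
      (∀ i j, G.know i j (GameGraph.playPrefix f (t + (a : ℕ))) =
        G.know i j (GameGraph.playPrefix f (t + (b : ℕ)))) → False := by
    intro a b hab' hpos hkn
    exact G.pump hG f hf t ℓ hgap (t + (a : ℕ)) (t + (b : ℕ)) (by omega) (by omega)
      (by have := b.isLt; omega) hpos hkn
  have h1 := congrArg Prod.fst heq
  have h2 := congrArg Prod.snd heq
  simp only at h1 h2
  rcases hab.lt_or_gt with h | h
  · exact key a b (Fin.lt_iff_val_lt_val.mp h) h1 (fun i j => congrFun (congrFun h2 i) j)
  · exact key b a (Fin.lt_iff_val_lt_val.mp h) h1.symm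
      (fun i j => (congrFun (congrFun h2 i) j).symm)
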